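/- Let S and A be finite nonempty sets, let p (true dynamics) and p̂ (learned model) be dynamics kernels, let π_D and π be policies with max_s TV(π_D(·|s), π(·|s)) ≤ ε_π, let ρ0 be a shared initial state distribution, r a reward bounded by r_max ≥ 0, γ ∈ (0,1), and k ∈ ℕ. Let η[π] be the return of π under p, and let η^{π_D,π} be the return of the branched process that runs π under the TRUE dynamics p for the first k timesteps and π_D under p thereafter. Then |η[π] − η^{π_D,π}| ≤ 2·r_max·[ γ^{k+1}·ε_π/(1−γ)² + γ^k·ε_π/(1−γ) ]. -/

import Mathlib

open scoped BigOperators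

/-- Total variation distance between two probability mass functions on a finite type. -/
noncomputable def tv {X : Type*} [Fintype X] (q1 q2 : PMF X) : ℝ :=
  (1 / 2) * ∑ x, |(q1 x).toReal - (q2 x).toReal|

/-- Total variation distance between two real-valued distributions on a finite type. -/
noncomputable def tvFun {X : Type*} [Fintype X] (d1 d2 : X → ℝ) : ℝ :=
  (1 / 2) * ∑ x, |d1 x - d2 x|

/-- Time-`t` state-action marginal of a (possibly time-varying) policy/dynamics pair,
started from initial state distribution `ρ0`:  `d⁰(s,a) = ρ0(s)·π₀(a|s)` and
`d^{t+1}(s,a) = Σ_{s',a'} d^t(s',a')·p_t(s|s',a')·π_{t+1}(a|s)`. -/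
noncomputable def marginal {S A : Type*} [Fintype S] [Fintype A]
    (ρ0 : PMF S) (πseq : ℕ → S → PMF A) (pseq : ℕ → S × A → PMF S) :
    ℕ → S × A → ℝ
  | 0 => fun sa => (ρ0 sa.1).toReal * ((πseq 0 sa.1) sa.2).toReal
  | t + 1 => fun sa =>
      ∑ s' : S, ∑ a' : A,
        marginal ρ0 πseq pseq t (s', a') * ((pseq t (s', a')) sa.1).toReal *
          ((πseq (t + 1) sa.1) sa.2).toReal

/-- Discounted return `η = Σ_t γ^t Σ_{s,a} d^t(s,a)·r(s,a)`. -/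
noncomputable def ret {S A : Type*} [Fintype S] [Fintype A]
    (γ : ℝ) (r : S × A → ℝ) (d : ℕ → S × A → ℝ) : ℝ :=
  ∑' t : ℕ, γ ^ t * ∑ sa : S × A, d t sa * r sa

lemma pmf_sum_one {X : Type*} [Fintype X] (q : PMF X) :
    ∑ x, (q x).toReal = 1 := by
  rw [← ENNReal.toReal_sum (fun a _ => PMF.apply_ne_top q a), ← tsum_fintype (L := .unconditional _), q.tsum_coe,
    ENNReal.toReal_one]

/-- One-step TV growth. -/
lemma step_tv_le {S A : Type*} [Fintype S] [Fintype A]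
    (p : S × A → PMF S) (π1 π2 : S → PMF A) (d1 d2 : S × A → ℝ)
    (hd2 : ∀ sa, 0 ≤ d2 sa) (hsum2 : ∑ sa : S × A, d2 sa = 1)
    (επ : ℝ) (hε : ∀ s, ∑ a, |((π1 s) a).toReal - ((π2 s) a).toReal| ≤ 2 * επ) :
    ∑ sa : S × A,
      |(∑ s', ∑ a', d1 (s', a') * ((p (s', a')) sa.1).toReal * ((π1 sa.1) sa.2).toReal) -
       (∑ s', ∑ a', d2 (s', a') * ((p (s', a')) sa.1).toReal * ((π2 sa.1) sa.2).toReal)| ≤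
      (∑ sa : S × A, |d1 sa - d2 sa|) + 2 * επ := by
  set m1 : S → ℝ := fun s => ∑ s', ∑ a', d1 (s', a') * ((p (s', a')) s).toReal with hm1
  set m2 : S → ℝ := fun s => ∑ s', ∑ a', d2 (s', a') * ((p (s', a')) s).toReal with hm2
  have hfac : ∀ (d : S × A → ℝ) (π : S → PMF A) (sa : S × A),
      (∑ s', ∑ a', d (s', a') * ((p (s', a')) sa.1).toReal * ((π sa.1) sa.2).toReal) =
      (∑ s', ∑ a', d (s', a') * ((p (s', a')) sa.1).toReal) * ((π sa.1) sa.2).toReal := by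
    intro d π sa
    rw [Finset.sum_mul]
    exact Finset.sum_congr rfl fun s' _ => by rw [Finset.sum_mul]
  have hm2nn : ∀ s, 0 ≤ m2 s := fun s =>
    Finset.sum_nonneg fun s' _ => Finset.sum_nonneg fun a' _ =>
      mul_nonneg (hd2 _) ENNReal.toReal_nonneg
  have hm2sum : ∑ s, m2 s = 1 := by
    rw [hm2]
    rw [Finset.sum_comm]
    have : ∀ s', ∑ s, ∑ a', d2 (s', a') * ((p (s', a')) s).toReal
        = ∑ a', d2 (s', a') := by
      intro s'
      rw [Finset.sum_comm]
      refine Finset.sum_congr rfl fun a' _ => ?_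
      rw [← Finset.mul_sum, pmf_sum_one, mul_one]
    rw [Finset.sum_congr rfl fun s' _ => this s']
    rw [← hsum2, Fintype.sum_prod_type]
  have hmdiff : ∑ s, |m1 s - m2 s| ≤ ∑ sa : S × A, |d1 sa - d2 sa| := by
    have h1 : ∀ s, |m1 s - m2 s| ≤ ∑ s', ∑ a', |d1 (s', a') - d2 (s', a')| * ((p (s', a')) s).toReal := by
      intro s
      rw [hm1, hm2, ← Finset.sum_sub_distrib]
      refine (Finset.abs_sum_le_sum_abs _ _).trans ?_
      refine Finset.sum_le_sum fun s' _ => ?_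
      rw [← Finset.sum_sub_distrib]
      refine (Finset.abs_sum_le_sum_abs _ _).trans ?_
      refine Finset.sum_le_sum fun a' _ => ?_
      rw [← sub_mul, abs_mul, abs_of_nonneg (ENNReal.toReal_nonneg)]
    calc ∑ s, |m1 s - m2 s|
        ≤ ∑ s, ∑ s', ∑ a', |d1 (s', a') - d2 (s', a')| * ((p (s', a')) s).toReal :=
          Finset.sum_le_sum fun s _ => h1 s
      _ = ∑ s', ∑ a', |d1 (s', a') - d2 (s', a')| := by
          rw [Finset.sum_comm]
          refine Finset.sum_congr rfl fun s' _ => ?_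
          rw [Finset.sum_comm]
          refine Finset.sum_congr rfl fun a' _ => ?_
          rw [← Finset.mul_sum, pmf_sum_one, mul_one]
      _ = ∑ sa : S × A, |d1 sa - d2 sa| := by rw [Fintype.sum_prod_type]
  calc ∑ sa : S × A,
      |(∑ s', ∑ a', d1 (s', a') * ((p (s', a')) sa.1).toReal * ((π1 sa.1) sa.2).toReal) -
       (∑ s', ∑ a', d2 (s', a') * ((p (s', a')) sa.1).toReal * ((π2 sa.1) sa.2).toReal)|
      = ∑ sa : S × A, |m1 sa.1 * ((π1 sa.1) sa.2).toReal - m2 sa.1 * ((π2 sa.1) sa.2).toReal| := by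
        refine Finset.sum_congr rfl fun sa _ => ?_
        rw [hfac d1 π1 sa, hfac d2 π2 sa]
    _ ≤ ∑ sa : S × A, (|m1 sa.1 - m2 sa.1| * ((π1 sa.1) sa.2).toReal
          + m2 sa.1 * |((π1 sa.1) sa.2).toReal - ((π2 sa.1) sa.2).toReal|) := by
        refine Finset.sum_le_sum fun sa _ => ?_
        have : m1 sa.1 * ((π1 sa.1) sa.2).toReal - m2 sa.1 * ((π2 sa.1) sa.2).toReal
            = (m1 sa.1 - m2 sa.1) * ((π1 sa.1) sa.2).toReal
              + m2 sa.1 * (((π1 sa.1) sa.2).toReal - ((π2 sa.1) sa.2).toReal) := by ring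
        rw [this]
        refine (abs_add_le _ _).trans ?_
        rw [abs_mul, abs_mul, abs_of_nonneg ENNReal.toReal_nonneg, abs_of_nonneg (hm2nn _)]
    _ = ∑ s, (|m1 s - m2 s| * (∑ a, ((π1 s) a).toReal)
          + m2 s * ∑ a, |((π1 s) a).toReal - ((π2 s) a).toReal|) := by
        rw [Fintype.sum_prod_type]
        refine Finset.sum_congr rfl fun s _ => ?_
        simp only [Finset.sum_add_distrib, Finset.mul_sum]
    _ ≤ ∑ s, (|m1 s - m2 s| + m2 s * (2 * επ)) := by
        refine Finset.sum_le_sum fun s _ => ?_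
        rw [pmf_sum_one, mul_one]
        exact add_le_add le_rfl (mul_le_mul_of_nonneg_left (hε s) (hm2nn s))
    _ = (∑ s, |m1 s - m2 s|) + 2 * επ := by
        rw [Finset.sum_add_distrib, ← Finset.sum_mul, hm2sum, one_mul]
    _ ≤ (∑ sa : S × A, |d1 sa - d2 sa|) + 2 * επ := add_le_add hmdiff le_rfl

lemma marginal_nonneg {S A : Type*} [Fintype S] [Fintype A]
    (ρ0 : PMF S) (πseq : ℕ → S → PMF A) (pseq : ℕ → S × A → PMF S) :
    ∀ t sa, 0 ≤ marginal ρ0 πseq pseq t sa := by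
  intro t
  induction t with
  | zero => intro sa; exact mul_nonneg ENNReal.toReal_nonneg ENNReal.toReal_nonneg
  | succ t ih =>
    intro sa
    refine Finset.sum_nonneg fun s' _ => Finset.sum_nonneg fun a' _ => ?_
    exact mul_nonneg (mul_nonneg (ih _) ENNReal.toReal_nonneg) ENNReal.toReal_nonneg

lemma marginal_sum_one {S A : Type*} [Fintype S] [Fintype A]
    (ρ0 : PMF S) (πseq : ℕ → S → PMF A) (pseq : ℕ → S × A → PMF S) :
    ∀ t, ∑ sa : S × A, marginal ρ0 πseq pseq t sa = 1 := by
  intro t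
  induction t with
  | zero =>
    rw [Fintype.sum_prod_type]
    simp only [marginal]
    calc ∑ s, ∑ a, (ρ0 s).toReal * ((πseq 0 s) a).toReal
        = ∑ s, (ρ0 s).toReal := by
          refine Finset.sum_congr rfl fun s _ => ?_
          rw [← Finset.mul_sum, pmf_sum_one, mul_one]
      _ = 1 := pmf_sum_one ρ0
  | succ t ih =>
    rw [Fintype.sum_prod_type]
    simp only [marginal]
    calc ∑ s, ∑ a, ∑ s', ∑ a', marginal ρ0 πseq pseq t (s', a') *
          ((pseq t (s', a')) s).toReal * ((πseq (t+1) s) a).toReal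
        = ∑ s, ∑ s', ∑ a', marginal ρ0 πseq pseq t (s', a') * ((pseq t (s', a')) s).toReal := by
          refine Finset.sum_congr rfl fun s _ => ?_
          rw [Finset.sum_comm]
          refine Finset.sum_congr rfl fun s' _ => ?_
          rw [Finset.sum_comm]
          refine Finset.sum_congr rfl fun a' _ => ?_
          rw [← Finset.mul_sum, pmf_sum_one, mul_one]
      _ = ∑ s', ∑ a', marginal ρ0 πseq pseq t (s', a') := by
          rw [Finset.sum_comm]
          refine Finset.sum_congr rfl fun s' _ => ?_
          rw [Finset.sum_comm]
          refine Finset.sum_congr rfl fun a' _ => ?_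
          rw [← Finset.mul_sum, pmf_sum_one, mul_one]
      _ = 1 := by rw [← Fintype.sum_prod_type, ih]


/-- Bound on the gap between the true returns of `π` and the returns of the branched
process running `π` under the true dynamics for `k` steps and `πD` afterwards
(term `L₁` in the proof of Theorem A.2). -/
theorem branched_policy_shift_bound
    {S A : Type*} [Fintype S] [Fintype A] [Nonempty S] [Nonempty A]
    (p phat : S × A → PMF S) (πD π : S → PMF A) (ρ0 : PMF S)
    (r : S × A → ℝ) (rmax : ℝ) (hrmax : 0 ≤ rmax) (hr : ∀ sa : S × A, |r sa| ≤ rmax)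
    (γ : ℝ) (hγ0 : 0 < γ) (hγ1 : γ < 1) (k : ℕ) (επ : ℝ)
    (hεπ : ∀ s : S, tv (πD s) (π s) ≤ επ) :
    |ret γ r (marginal ρ0 (fun _ => π) (fun _ => p)) -
        ret γ r (marginal ρ0 (fun t => if t < k then π else πD) (fun _ => p))| ≤
      2 * rmax * (γ ^ (k + 1) * επ / (1 - γ) ^ 2 + γ ^ k * επ / (1 - γ)) := by
  set d1 := marginal ρ0 (fun _ => π) (fun _ => p) with hd1
  set d2 := marginal ρ0 (fun t => if t < k then π else πD) (fun _ => p) with hd2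
  have hγnn : 0 ≤ γ := hγ0.le
  have h1γ : (0:ℝ) < 1 - γ := by linarith
  -- επ nonneg
  have hεnn : 0 ≤ επ := by
    obtain ⟨s⟩ := (inferInstance : Nonempty S)
    refine le_trans ?_ (hεπ s)
    unfold tv
    positivity
  -- sum form of the TV hypothesis
  have hεsum : ∀ s, ∑ a, |((π s) a).toReal - ((πD s) a).toReal| ≤ 2 * επ := by
    intro s
    have h := hεπ s
    unfold tv at h
    have : ∑ a, |((πD s) a).toReal - ((π s) a).toReal|
        = ∑ a, |((π s) a).toReal - ((πD s) a).toReal| :=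
      Finset.sum_congr rfl fun a _ => abs_sub_comm _ _
    linarith [h, this.symm.le]
  -- marginals agree before the branch point
  have heq : ∀ t, t < k → ∀ sa, d1 t sa = d2 t sa := by
    intro t
    induction t with
    | zero =>
      intro h0 sa
      simp only [hd1, hd2, marginal, if_pos h0]
    | succ t ih =>
      intro h sa
      have ht : t < k := Nat.lt_of_succ_lt h
      simp only [hd1, hd2, marginal, if_pos h]
      rw [← hd1, ← hd2]
      exact Finset.sum_congr rfl fun s' _ => Finset.sum_congr rfl fun a' _ => by
        rw [ih ht]
    -- TV growth bound
  have hD : ∀ t, ∑ sa : S × A, |d1 t sa - d2 t sa| ≤ 2 * επ * ((t + 1 - k : ℕ) : ℝ) := by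
    intro t
    induction t with
    | zero =>
      by_cases hk : 0 < k
      · have : ∀ sa : S × A, d1 0 sa = d2 0 sa := heq 0 hk
        simp only [this, sub_self, abs_zero, Finset.sum_const_zero]
        positivity
      · have hk0 : k = 0 := by omega
        subst hk0
        simp only [hd1, hd2, marginal, Nat.lt_irrefl, if_neg (lt_irrefl 0)]
        calc ∑ sa : S × A, |(ρ0 sa.1).toReal * ((π sa.1) sa.2).toReal -
              (ρ0 sa.1).toReal * ((πD sa.1) sa.2).toReal|
            = ∑ s, ∑ a, (ρ0 s).toReal * |((π s) a).toReal - ((πD s) a).toReal| := by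
              rw [Fintype.sum_prod_type]
              refine Finset.sum_congr rfl fun s _ => Finset.sum_congr rfl fun a _ => ?_
              rw [← mul_sub, abs_mul, abs_of_nonneg ENNReal.toReal_nonneg]
          _ ≤ ∑ s, (ρ0 s).toReal * (2 * επ) := by
              refine Finset.sum_le_sum fun s _ => ?_
              rw [← Finset.mul_sum]
              exact mul_le_mul_of_nonneg_left (hεsum s) ENNReal.toReal_nonneg
          _ = 2 * επ := by rw [← Finset.sum_mul, pmf_sum_one, one_mul]
          _ ≤ 2 * επ * ((0 + 1 - 0 : ℕ) : ℝ) := by norm_num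
    | succ t ih =>
      by_cases h : t + 1 < k
      · have : ∀ sa : S × A, d1 (t+1) sa = d2 (t+1) sa := heq (t+1) h
        simp only [this, sub_self, abs_zero, Finset.sum_const_zero]
        positivity
      · have hk : k ≤ t + 1 := by omega
        have hstep : ∑ sa : S × A, |d1 (t+1) sa - d2 (t+1) sa| ≤
            (∑ sa : S × A, |d1 t sa - d2 t sa|) + 2 * επ := by
          have := step_tv_le p π πD (d1 t) (d2 t)
            (marginal_nonneg ρ0 _ _ t) (marginal_sum_one ρ0 _ _ t) επ hεsum
          simpa only [hd1, hd2, marginal, if_neg h] using this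
        have hcast : ((t + 1 + 1 - k : ℕ) : ℝ) = ((t + 1 - k : ℕ) : ℝ) + 1 := by
          have : t + 1 + 1 - k = (t + 1 - k) + 1 := by omega
          rw [this]; push_cast; ring
        calc ∑ sa : S × A, |d1 (t+1) sa - d2 (t+1) sa|
            ≤ (∑ sa : S × A, |d1 t sa - d2 t sa|) + 2 * επ := hstep
          _ ≤ 2 * επ * ((t + 1 - k : ℕ) : ℝ) + 2 * επ := add_le_add ih le_rfl
          _ = 2 * επ * ((t + 1 + 1 - k : ℕ) : ℝ) := by rw [hcast]; ring
  -- per-time-step reward sums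
  set f1 : ℕ → ℝ := fun t => γ ^ t * ∑ sa : S × A, d1 t sa * r sa with hf1
  set f2 : ℕ → ℝ := fun t => γ ^ t * ∑ sa : S × A, d2 t sa * r sa with hf2
  have hbound : ∀ (d : ℕ → S × A → ℝ), (∀ t sa, 0 ≤ d t sa) →
      (∀ t, ∑ sa : S × A, d t sa = 1) →
      ∀ t, |γ ^ t * ∑ sa : S × A, d t sa * r sa| ≤ rmax * γ ^ t := by
    intro d hnn hsum t
    rw [abs_mul, abs_of_nonneg (pow_nonneg hγnn t)]
    have : |∑ sa : S × A, d t sa * r sa| ≤ rmax := by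
      refine (Finset.abs_sum_le_sum_abs _ _).trans ?_
      calc ∑ sa : S × A, |d t sa * r sa|
          ≤ ∑ sa : S × A, d t sa * rmax := by
            refine Finset.sum_le_sum fun sa _ => ?_
            rw [abs_mul, abs_of_nonneg (hnn t sa)]
            exact mul_le_mul_of_nonneg_left (hr sa) (hnn t sa)
        _ = rmax := by rw [← Finset.sum_mul, hsum, one_mul]
    calc γ ^ t * |∑ sa : S × A, d t sa * r sa| ≤ γ ^ t * rmax :=
          mul_le_mul_of_nonneg_left this (pow_nonneg hγnn t)
      _ = rmax * γ ^ t := mul_comm _ _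
  have hgeo : Summable (fun t : ℕ => rmax * γ ^ t) :=
    (summable_geometric_of_lt_one hγnn hγ1).mul_left rmax
  have hs1 : Summable f1 := by
    refine Summable.of_abs (hgeo.of_nonneg_of_le (fun t => abs_nonneg _) ?_)
    exact hbound d1 (marginal_nonneg ρ0 _ _) (marginal_sum_one ρ0 _ _)
  have hs2 : Summable f2 := by
    refine Summable.of_abs (hgeo.of_nonneg_of_le (fun t => abs_nonneg _) ?_)
    exact hbound d2 (marginal_nonneg ρ0 _ _) (marginal_sum_one ρ0 _ _)
  -- per-term difference bound
  set g : ℕ → ℝ := fun t => 2 * rmax * επ * (γ ^ t * ((t + 1 - k : ℕ) : ℝ)) with hg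
  have hdiff : ∀ t, |f1 t - f2 t| ≤ g t := by
    intro t
    rw [hf1, hf2]
    simp only
    rw [← mul_sub, abs_mul, abs_of_nonneg (pow_nonneg hγnn t), ← Finset.sum_sub_distrib]
    have h1 : |∑ sa : S × A, (d1 t sa * r sa - d2 t sa * r sa)| ≤
        rmax * ∑ sa : S × A, |d1 t sa - d2 t sa| := by
      refine (Finset.abs_sum_le_sum_abs _ _).trans ?_
      rw [Finset.mul_sum]
      refine Finset.sum_le_sum fun sa _ => ?_
      rw [← sub_mul, abs_mul, mul_comm]
      exact mul_le_mul_of_nonneg_right (hr sa) (abs_nonneg _)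
    calc γ ^ t * |∑ sa : S × A, (d1 t sa * r sa - d2 t sa * r sa)|
        ≤ γ ^ t * (rmax * ∑ sa : S × A, |d1 t sa - d2 t sa|) :=
          mul_le_mul_of_nonneg_left h1 (pow_nonneg hγnn t)
      _ ≤ γ ^ t * (rmax * (2 * επ * ((t + 1 - k : ℕ) : ℝ))) := by
          refine mul_le_mul_of_nonneg_left (mul_le_mul_of_nonneg_left (hD t) hrmax)
            (pow_nonneg hγnn t)
      _ = g t := by rw [hg]; ring
  -- sum of the bound
  have hγabs : |γ| < 1 := by rwa [abs_of_nonneg hγnn]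
  have hchoose : HasSum (fun n : ℕ => ((n+1 : ℕ) : ℝ) * γ ^ n) (1 / (1 - γ) ^ 2) := by
    have := hasSum_choose_mul_geometric_of_norm_lt_one 1 (by rwa [Real.norm_eq_abs])
    simpa [Nat.choose_one_right] using this
  have hgsum : HasSum g (2 * rmax * επ * (γ ^ k / (1 - γ) ^ 2)) := by
    have h2 : HasSum (fun n : ℕ => g (n + k)) (2 * rmax * επ * (γ ^ k * (1 / (1 - γ) ^ 2))) := by
      have := (hchoose.mul_left (γ ^ k)).mul_left (2 * rmax * επ)
      refine this.congr_fun fun n => ?_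
      rw [hg]
      simp only
      have hnk : n + k + 1 - k = n + 1 := by omega
      rw [hnk, pow_add]
      ring
    have := (hasSum_nat_add_iff (f := g) k).mp h2
    have hzero : ∑ i ∈ Finset.range k, g i = 0 := by
      refine Finset.sum_eq_zero fun i hi => ?_
      rw [hg]
      simp only
      have : i + 1 - k = 0 := by
        have := Finset.mem_range.mp hi; omega
      rw [this]
      simp
    rw [hzero, add_zero] at this
    convert this using 1
    · rfl
    ring
  -- assemble
  have hret : ret γ r d1 - ret γ r d2 = ∑' t, (f1 t - f2 t) := by
    rw [ret, ret, ← Summable.tsum_sub hs1 hs2]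
  rw [hret]
  have habs : Summable (fun t => |f1 t - f2 t|) := (hs1.sub hs2).abs
  calc |∑' t, (f1 t - f2 t)|
      ≤ ∑' t, |f1 t - f2 t| := by
        simpa [Real.norm_eq_abs] using norm_tsum_le_tsum_norm (f := fun t => f1 t - f2 t)
          (by simpa [Real.norm_eq_abs] using habs)
    _ ≤ ∑' t, g t := Summable.tsum_le_tsum hdiff habs hgsum.summable
    _ = 2 * rmax * επ * (γ ^ k / (1 - γ) ^ 2) := hgsum.tsum_eq
    _ = 2 * rmax * (γ ^ (k + 1) * επ / (1 - γ) ^ 2 + γ ^ k * επ / (1 - γ)) := by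
        rw [pow_succ]
        field_simp
        ring
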